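/- arXiv:math/9801056 — 3 statements merged into one kernel-verified Lean document; each statement's English description precedes it below -/
import Mathlib

section
/- There exist real sequences (c_r)_{r≥0} and (d_r)_{r≥0} with c₀ = d₀ = 1 such that the power series y₁(x) = Σ_{r=0}^∞ c_r x^{3r} and y₂(x) = x²·Σ_{r=0}^∞ d_r x^{3r} converge for all real x and define functions that each solve the differential equation y'''(x) − x²y''(x) − xy'(x) + y(x) = 0 on ℝ. -/
open Function

noncomputable section EntireAux

namespace EntireAux

/-- The coefficient sequence defined by the recurrence coming from
`y''' - x²y'' - xy' + y = 0`. -/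
def aseq (a0 a1 a2 : ℝ) : ℕ → ℝ
  | 0 => a0
  | 1 => a1
  | 2 => a2
  | (n+3) => aseq a0 a1 a2 n * ((n : ℝ) - 1) / (((n : ℝ) + 2) * ((n : ℝ) + 3))

lemma aseq_rec (a0 a1 a2 : ℝ) (n : ℕ) :
    ((n:ℝ)+1) * ((n:ℝ)+2) * ((n:ℝ)+3) * aseq a0 a1 a2 (n+3)
      = ((n:ℝ)-1) * ((n:ℝ)+1) * aseq a0 a1 a2 n := by
  have h2 : ((n:ℝ)+2) ≠ 0 := by positivity
  have h3 : ((n:ℝ)+3) ≠ 0 := by positivity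
  rw [aseq]
  field_simp

lemma aseq_bound (a0 a1 a2 : ℝ) (h0 : |a0| ≤ 1) (h1 : |a1| ≤ 1) (h2 : |a2| ≤ 1) :
    ∀ n, |aseq a0 a1 a2 n| ≤ 1 / (Nat.factorial (n / 3) : ℝ) := by
  intro n
  induction n using Nat.strong_induction_on with
  | _ n ih =>
    match n with
    | 0 => simpa [aseq] using h0
    | 1 => simpa [aseq] using h1
    | 2 => simpa [aseq] using h2
    | (m+3) =>
      have hm := ih m (by omega)
      have hd : (0:ℝ) < ((m:ℝ)+2) * ((m:ℝ)+3) := by positivity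
      have hFpos : (0:ℝ) < (Nat.factorial (m/3) : ℝ) := by
        exact_mod_cast Nat.factorial_pos _
      have habs : |aseq a0 a1 a2 (m+3)|
          = |aseq a0 a1 a2 m| * |(m:ℝ) - 1| / (((m:ℝ)+2) * ((m:ℝ)+3)) := by
        rw [aseq, abs_div, abs_mul, abs_of_pos hd]
      have hm2 : |(m:ℝ) - 1| ≤ (m:ℝ) + 2 := by
        rw [abs_le]
        constructor <;> nlinarith [Nat.cast_nonneg (α := ℝ) m]
      have hfac : ((m+3) / 3 : ℕ) = m / 3 + 1 := Nat.add_div_right m (by norm_num)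
      rw [habs, hfac]
      have hA : (0:ℝ) ≤ |aseq a0 a1 a2 m| := abs_nonneg _
      calc |aseq a0 a1 a2 m| * |(m:ℝ) - 1| / (((m:ℝ)+2) * ((m:ℝ)+3))
          ≤ (1 / (Nat.factorial (m/3) : ℝ)) * ((m:ℝ) + 2) / (((m:ℝ)+2) * ((m:ℝ)+3)) := by
            gcongr
        _ = 1 / ((Nat.factorial (m/3) : ℝ) * ((m:ℝ)+3)) := by
            field_simp
        _ ≤ 1 / (Nat.factorial (m/3 + 1) : ℝ) := by
            apply one_div_le_one_div_of_le
            · exact_mod_cast Nat.factorial_pos _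
            · rw [Nat.factorial_succ]
              push_cast
              have : ((m/3 : ℕ) : ℝ) ≤ (m:ℝ) := by exact_mod_cast Nat.div_le_self m 3
              nlinarith

lemma aseq_zero₁ : ∀ n, n % 3 ≠ 0 → aseq 1 0 0 n = 0 := by
  intro n
  induction n using Nat.strong_induction_on with
  | _ n ih =>
    match n with
    | 0 => intro h; simp at h
    | 1 => intro _; rfl
    | 2 => intro _; rfl
    | (m+3) =>
      intro h
      have : m % 3 ≠ 0 := by omega
      rw [aseq, ih m (by omega) this]
      ring

lemma aseq_zero₂ : ∀ n, n % 3 ≠ 2 → aseq 0 0 1 n = 0 := by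
  intro n
  induction n using Nat.strong_induction_on with
  | _ n ih =>
    match n with
    | 0 => intro _; rfl
    | 1 => intro _; rfl
    | 2 => intro h; simp at h
    | (m+3) =>
      intro h
      have : m % 3 ≠ 2 := by omega
      rw [aseq, ih m (by omega) this]
      ring

/-- Summability of `∑ Sⁿ / (n/3)!`. -/
lemma summable_pow_div_div3 (S : ℝ) (hS : 0 ≤ S) :
    Summable (fun n : ℕ => S ^ n / (Nat.factorial (n / 3) : ℝ)) := by
  set K : ℝ := max 1 (S ^ 2) with hK
  have hg : Summable (fun q : ℕ => (S ^ 3) ^ q / (Nat.factorial q : ℝ)) :=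
    Real.summable_pow_div_factorial _
  -- summability over the product ℕ × Fin 3
  have hprod : Summable (fun p : ℕ × Fin 3 => (S ^ 3) ^ p.1 / (Nat.factorial p.1 : ℝ)) := by
    rw [summable_prod_of_nonneg (by intro p; positivity)]
    refine ⟨fun q => Summable.of_finite, ?_⟩
    have heq : (fun q : ℕ => ∑' _ : Fin 3, (S ^ 3) ^ q / (Nat.factorial q : ℝ))
        = fun q : ℕ => 3 * ((S ^ 3) ^ q / (Nat.factorial q : ℝ)) := by
      funext q
      rw [tsum_fintype]
      simp [Finset.sum_const]
    rw [heq]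
    exact hg.mul_left 3
  have hcomp : Summable (fun n : ℕ => (S ^ 3) ^ (n / 3) / (Nat.factorial (n / 3) : ℝ)) := by
    have := (Equiv.summable_iff (Nat.divModEquiv 3)
      (f := fun p : ℕ × Fin 3 => (S ^ 3) ^ p.1 / (Nat.factorial p.1 : ℝ))).2 hprod
    exact this
  refine Summable.of_nonneg_of_le (fun n => by positivity) (fun n => ?_) (hcomp.mul_left K)
  have hmod : S ^ (n % 3) ≤ K := by
    have h3 : n % 3 = 0 ∨ n % 3 = 1 ∨ n % 3 = 2 := by omega
    rcases h3 with h | h | h <;> rw [h]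
    · simp [hK]
    · rw [pow_one]
      rcases le_or_gt S 1 with hS1 | hS1
      · exact le_trans hS1 (le_max_left _ _)
      · exact le_trans (by nlinarith) (le_max_right 1 (S ^ 2))
    · exact le_max_right _ _
  have hSn : S ^ n = (S ^ 3) ^ (n / 3) * S ^ (n % 3) := by
    rw [← pow_mul, ← pow_add]
    congr 1
    omega
  have hfp : (0:ℝ) < (Nat.factorial (n / 3) : ℝ) := by exact_mod_cast Nat.factorial_pos _
  rw [hSn]
  calc (S ^ 3) ^ (n / 3) * S ^ (n % 3) / (Nat.factorial (n / 3) : ℝ)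
      ≤ (S ^ 3) ^ (n / 3) * K / (Nat.factorial (n / 3) : ℝ) := by
        gcongr
    _ = K * ((S ^ 3) ^ (n / 3) / (Nat.factorial (n / 3) : ℝ)) := by ring

/-- Master summability lemma: `∑ (n+1)ᵏ Rⁿ / (n/3)!` converges for `R ≥ 0`. -/
lemma summable_master (k : ℕ) {R : ℝ} (hR : 0 ≤ R) :
    Summable (fun n : ℕ => ((n:ℝ)+1) ^ k * R ^ n / (Nat.factorial (n / 3) : ℝ)) := by
  have hs := summable_pow_div_div3 ((2:ℝ) ^ k * R) (by positivity)
  refine Summable.of_nonneg_of_le (fun n => by positivity) (fun n => ?_) hs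
  have h0 : ((n:ℝ)+1) ≤ (2:ℝ) ^ n := by
    exact_mod_cast Nat.succ_le_of_lt (Nat.lt_two_pow_self (n := n))
  have h1 : ((n:ℝ)+1) ^ k ≤ ((2:ℝ) ^ n) ^ k :=
    pow_le_pow_left₀ (by positivity) h0 k
  have hfp : (0:ℝ) < (Nat.factorial (n / 3) : ℝ) := by exact_mod_cast Nat.factorial_pos _
  have hkey : ((n:ℝ)+1) ^ k * R ^ n ≤ ((2:ℝ) ^ k * R) ^ n := by
    calc ((n:ℝ)+1) ^ k * R ^ n ≤ ((2:ℝ) ^ n) ^ k * R ^ n := by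
          exact mul_le_mul_of_nonneg_right h1 (by positivity)
      _ = ((2:ℝ) ^ k * R) ^ n := by rw [mul_pow, ← pow_mul, ← pow_mul, Nat.mul_comm]
  gcongr

/-- Polynomially-weighted factorial decay of coefficients. -/
def Gd (k : ℕ) (b : ℕ → ℝ) : Prop :=
  ∃ C : ℝ, ∀ n, |b n| ≤ C * ((n:ℝ)+1) ^ k / (Nat.factorial (n / 3) : ℝ)

/-- Coefficients of the derivative series. -/
def sh (b : ℕ → ℝ) : ℕ → ℝ := fun n => ((n:ℝ)+1) * b (n+1)

lemma Gd.nonneg_const {k : ℕ} {b : ℕ → ℝ} {C : ℝ}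
    (h : ∀ n, |b n| ≤ C * ((n:ℝ)+1) ^ k / (Nat.factorial (n / 3) : ℝ)) : 0 ≤ C := by
  have := (abs_nonneg (b 0)).trans (h 0)
  simpa using this

lemma Gd.step {k : ℕ} {b : ℕ → ℝ} (hb : Gd k b) : Gd (k+1) (sh b) := by
  obtain ⟨C, hC⟩ := hb
  have hC0 : 0 ≤ C := Gd.nonneg_const hC
  refine ⟨2 ^ k * C, fun n => ?_⟩
  have hfle : (Nat.factorial (n / 3) : ℝ) ≤ (Nat.factorial ((n+1) / 3) : ℝ) := by
    exact_mod_cast Nat.factorial_le (Nat.div_le_div_right (Nat.le_succ n))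
  have hfp : (0:ℝ) < (Nat.factorial (n / 3) : ℝ) := by exact_mod_cast Nat.factorial_pos _
  have hfp' : (0:ℝ) < (Nat.factorial ((n+1) / 3) : ℝ) := by exact_mod_cast Nat.factorial_pos _
  have h1 : |EntireAux.sh b n| = ((n:ℝ)+1) * |b (n+1)| := by
    rw [EntireAux.sh, abs_mul, abs_of_pos (by positivity)]
  rw [h1]
  calc ((n:ℝ)+1) * |b (n+1)|
      ≤ ((n:ℝ)+1) * (C * ((n:ℝ)+2) ^ k / (Nat.factorial ((n+1) / 3) : ℝ)) := by
        refine mul_le_mul_of_nonneg_left ?_ (by positivity)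
        have hstep := hC (n+1)
        have hcast : (((n+1 : ℕ)):ℝ) + 1 = (n:ℝ) + 2 := by push_cast; ring
        rw [hcast] at hstep
        exact hstep
    _ ≤ ((n:ℝ)+1) * (C * ((n:ℝ)+2) ^ k / (Nat.factorial (n / 3) : ℝ)) := by gcongr
    _ ≤ ((n:ℝ)+1) * (C * (2 * ((n:ℝ)+1)) ^ k / (Nat.factorial (n / 3) : ℝ)) := by
        gcongr
        linarith
    _ = 2 ^ k * C * ((n:ℝ)+1) ^ (k+1) / (Nat.factorial (n / 3) : ℝ) := by
        rw [mul_pow]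
        field_simp
        ring

lemma Gd.summable {k : ℕ} {b : ℕ → ℝ} (hb : Gd k b) (x : ℝ) :
    Summable fun n => b n * x ^ n := by
  obtain ⟨C, hC⟩ := hb
  refine Summable.of_norm_bounded ((summable_master k (abs_nonneg x)).mul_left C) fun n => ?_
  have hfp : (0:ℝ) < (Nat.factorial (n / 3) : ℝ) := by exact_mod_cast Nat.factorial_pos _
  have : ‖b n * x ^ n‖ = |b n| * |x| ^ n := by
    rw [norm_mul, norm_pow]; rfl
  rw [this]
  calc |b n| * |x| ^ n ≤ C * ((n:ℝ)+1) ^ k / (Nat.factorial (n / 3) : ℝ) * |x| ^ n := by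
        gcongr
        exact hC n
    _ = C * (((n:ℝ)+1) ^ k * |x| ^ n / (Nat.factorial (n / 3) : ℝ)) := by ring

/-- The sum function of the power series with coefficients `b`. -/
def F (b : ℕ → ℝ) : ℝ → ℝ := fun x => ∑' n, b n * x ^ n

lemma Gd.hasDerivAt {k : ℕ} {b : ℕ → ℝ} (hb : Gd k b) (x : ℝ) :
    HasDerivAt (F b) (F (sh b) x) x := by
  obtain ⟨C, hC⟩ := hb
  have hC0 : 0 ≤ C := Gd.nonneg_const hC
  set R : ℝ := |x| + 1 with hR
  have hR1 : (1:ℝ) ≤ R := by rw [hR]; linarith [abs_nonneg x]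
  have hR0 : (0:ℝ) ≤ R := by linarith
  have hxball : x ∈ Metric.ball (0:ℝ) R := by
    simp only [Metric.mem_ball, dist_zero_right, Real.norm_eq_abs]
    linarith
  set u : ℕ → ℝ := fun n => C * (((n:ℝ)+1) ^ (k+1) * R ^ n / (Nat.factorial (n / 3) : ℝ)) with hu
  have hus : Summable u := (summable_master (k+1) hR0).mul_left C
  have key := hasDerivAt_tsum_of_isPreconnected hus Metric.isOpen_ball
      (convex_ball (0:ℝ) R).isPreconnected
      (g := fun n y => b n * y ^ n)
      (g' := fun n y => b n * ((n:ℝ) * y ^ (n-1)))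
      (fun n y _ => (hasDerivAt_pow n y).const_mul (b n))
      (fun n y hy => ?_) hxball ((Gd.summable ⟨C, hC⟩ x)) hxball
  · have hval : (∑' n, b n * ((n:ℝ) * x ^ (n-1))) = F (sh b) x := by
      have hinj : Function.Injective (fun c : ℕ => c + 1) := fun p q h => by simpa using h
      have hsupp : Function.support (fun n : ℕ => b n * ((n:ℝ) * x ^ (n-1)))
          ⊆ Set.range (fun c : ℕ => c + 1) := by
        intro n hn
        match n with
        | 0 => simp [Function.mem_support] at hn
        | (m+1) => exact ⟨m, rfl⟩
      have := hinj.tsum_eq (f := fun n : ℕ => b n * ((n:ℝ) * x ^ (n-1))) hsupp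
      rw [F, ← this]
      congr 1
      funext c
      simp only [EntireAux.sh, Nat.add_sub_cancel]
      push_cast
      ring
    rw [hval] at key
    exact key
  · -- derivative bound on the ball
    have hyR : |y| ≤ R := by
      simp only [Metric.mem_ball, dist_zero_right, Real.norm_eq_abs] at hy
      linarith
    have hy0 : (0:ℝ) ≤ |y| := abs_nonneg _
    have hfp : (0:ℝ) < (Nat.factorial (n / 3) : ℝ) := by exact_mod_cast Nat.factorial_pos _
    have h1 : ‖b n * ((n:ℝ) * y ^ (n-1))‖ = |b n| * ((n:ℝ) * |y| ^ (n-1)) := by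
      rw [norm_mul, norm_mul, norm_pow]
      simp [abs_of_nonneg (Nat.cast_nonneg (α := ℝ) n), Real.norm_eq_abs]
    rw [h1, hu]
    calc |b n| * ((n:ℝ) * |y| ^ (n-1))
        ≤ (C * ((n:ℝ)+1) ^ k / (Nat.factorial (n / 3) : ℝ)) * (((n:ℝ)+1) * R ^ n) := by
          have h2 : (n:ℝ) * |y| ^ (n-1) ≤ ((n:ℝ)+1) * R ^ n := by
            have h3 : |y| ^ (n-1) ≤ R ^ (n-1) := by gcongr
            have h4 : R ^ (n-1) ≤ R ^ n := pow_le_pow_right₀ hR1 (Nat.sub_le n 1)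
            have h5 : (n:ℝ) ≤ (n:ℝ)+1 := by linarith
            have h6 : (0:ℝ) ≤ (n:ℝ) := Nat.cast_nonneg n
            nlinarith [pow_nonneg hy0 (n-1), pow_nonneg hR0 n, pow_nonneg hR0 (n-1)]
          exact mul_le_mul (hC n) h2 (by positivity) (by positivity)
      _ = C * (((n:ℝ)+1) ^ (k+1) * R ^ n / (Nat.factorial (n / 3) : ℝ)) := by
          rw [pow_succ]
          field_simp

lemma Gd.deriv_F {k : ℕ} {b : ℕ → ℝ} (hb : Gd k b) :
    deriv (F b) = F (sh b) :=
  funext fun x => (Gd.hasDerivAt hb x).deriv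

lemma Gd.differentiable {k : ℕ} {b : ℕ → ℝ} (hb : Gd k b) : Differentiable ℝ (F b) :=
  fun x => (Gd.hasDerivAt hb x).differentiableAt

lemma Gd.contDiff3 {k : ℕ} {b : ℕ → ℝ} (hb : Gd k b) : ContDiff ℝ 3 (F b) := by
  have h1 := Gd.step hb
  have h2 := Gd.step h1
  have h3 := Gd.step h2
  rw [show (3 : WithTop ℕ∞) = 2 + 1 from rfl, contDiff_succ_iff_deriv]
  refine ⟨Gd.differentiable hb, by simp, ?_⟩
  rw [Gd.deriv_F hb, show (2 : WithTop ℕ∞) = 1 + 1 from rfl, contDiff_succ_iff_deriv]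
  refine ⟨Gd.differentiable h1, by simp, ?_⟩
  rw [Gd.deriv_F h1, show (1 : WithTop ℕ∞) = 0 + 1 from rfl, contDiff_succ_iff_deriv]
  refine ⟨Gd.differentiable h2, by simp, ?_⟩
  rw [Gd.deriv_F h2]
  exact contDiff_zero.2 (Gd.differentiable h3).continuous

lemma iteratedDeriv_F {k : ℕ} {b : ℕ → ℝ} (hb : Gd k b) :
    iteratedDeriv 2 (F b) = F (sh (sh b)) ∧
    iteratedDeriv 3 (F b) = F (sh (sh (sh b))) := by
  have h1 := Gd.step hb
  have h2 := Gd.step h1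
  have e2 : iteratedDeriv 2 (F b) = F (sh (sh b)) := by
    rw [show (2:ℕ) = 1 + 1 by rfl, iteratedDeriv_succ, iteratedDeriv_one,
      Gd.deriv_F hb, Gd.deriv_F h1]
  refine ⟨e2, ?_⟩
  rw [show (3:ℕ) = 2 + 1 by rfl, iteratedDeriv_succ, e2, Gd.deriv_F h2]

/-- The ODE is satisfied by `F a` whenever the coefficients obey the recurrence. -/
lemma F_ode {a : ℕ → ℝ} (ha : Gd 0 a)
    (hrec : ∀ n : ℕ, ((n:ℝ)+1) * ((n:ℝ)+2) * ((n:ℝ)+3) * a (n+3)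
      = ((n:ℝ)-1) * ((n:ℝ)+1) * a n) (x : ℝ) :
    iteratedDeriv 3 (F a) x - x ^ 2 * iteratedDeriv 2 (F a) x - x * deriv (F a) x + F a x
      = 0 := by
  obtain ⟨C, hC⟩ := ha
  have hC0 : 0 ≤ C := Gd.nonneg_const hC
  have hid := iteratedDeriv_F (⟨C, hC⟩ : Gd 0 a)
  rw [hid.2, hid.1, Gd.deriv_F (⟨C, hC⟩ : Gd 0 a)]
  -- the four constituent coefficient sequences
  set fA : ℕ → ℝ := fun n => sh (sh (sh a)) n * x ^ n with hfA
  set fB : ℕ → ℝ := fun n => (n:ℝ) * ((n:ℝ)-1) * a n * x ^ n with hfB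
  set fC : ℕ → ℝ := fun n => (n:ℝ) * a n * x ^ n with hfC
  set fD : ℕ → ℝ := fun n => a n * x ^ n with hfD
  have hGB : Gd 2 (fun n => (n:ℝ) * ((n:ℝ)-1) * a n) := by
    refine ⟨C, fun n => ?_⟩
    have h1 : |(n:ℝ) * ((n:ℝ)-1) * a n| = |(n:ℝ)| * |(n:ℝ)-1| * |a n| := by
      rw [abs_mul, abs_mul]
    have h2 : |(n:ℝ)| ≤ (n:ℝ)+1 := by
      rw [abs_of_nonneg (Nat.cast_nonneg n)]; linarith
    have h3 : |(n:ℝ)-1| ≤ (n:ℝ)+1 := by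
      rw [abs_le]; constructor <;> nlinarith [Nat.cast_nonneg (α := ℝ) n]
    have hfp : (0:ℝ) < (Nat.factorial (n / 3) : ℝ) := by exact_mod_cast Nat.factorial_pos _
    rw [h1]
    calc |(n:ℝ)| * |(n:ℝ)-1| * |a n|
        ≤ (((n:ℝ)+1) * ((n:ℝ)+1)) * (C * ((n:ℝ)+1)^0 / (Nat.factorial (n / 3) : ℝ)) := by
          refine mul_le_mul (by gcongr) (hC n) (abs_nonneg _) (by positivity)
      _ = C * ((n:ℝ)+1)^2 / (Nat.factorial (n / 3) : ℝ) := by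
          field_simp
  have hGC : Gd 1 (fun n => (n:ℝ) * a n) := by
    refine ⟨C, fun n => ?_⟩
    have h2 : |(n:ℝ)| ≤ (n:ℝ)+1 := by
      rw [abs_of_nonneg (Nat.cast_nonneg n)]; linarith
    have hfp : (0:ℝ) < (Nat.factorial (n / 3) : ℝ) := by exact_mod_cast Nat.factorial_pos _
    rw [abs_mul]
    calc |(n:ℝ)| * |a n|
        ≤ (((n:ℝ)+1)) * (C * ((n:ℝ)+1)^0 / (Nat.factorial (n / 3) : ℝ)) :=
          mul_le_mul h2 (hC n) (abs_nonneg _) (by positivity)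
      _ = C * ((n:ℝ)+1)^1 / (Nat.factorial (n / 3) : ℝ) := by
          field_simp
  have hGA : Gd 3 (sh (sh (sh a))) :=
    Gd.step (Gd.step (Gd.step ⟨C, hC⟩))
  have hSA : Summable fA := Gd.summable hGA x
  have hSB : Summable fB := Gd.summable hGB x
  have hSC : Summable fC := Gd.summable hGC x
  have hSD : Summable fD := Gd.summable (⟨C, hC⟩ : Gd 0 a) x
  -- rewrite the `x² y''` term
  have hB : x ^ 2 * F (sh (sh a)) x = ∑' n, fB n := by
    rw [F, ← tsum_mul_left]
    have hinj : Function.Injective (fun c : ℕ => c + 2) := fun p q h => by simpa using h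
    have hsupp : Function.support fB ⊆ Set.range (fun c : ℕ => c + 2) := by
      intro n hn
      match n with
      | 0 => simp [hfB, Function.mem_support] at hn
      | 1 => simp [hfB, Function.mem_support] at hn
      | (m+2) => exact ⟨m, rfl⟩
    rw [← hinj.tsum_eq (f := fB) hsupp]
    congr 1
    funext c
    simp only [hfB, EntireAux.sh]
    push_cast
    ring
  -- rewrite the `x y'` term
  have hCt : x * F (sh a) x = ∑' n, fC n := by
    rw [F, ← tsum_mul_left]
    have hinj : Function.Injective (fun c : ℕ => c + 1) := fun p q h => by simpa using h
    have hsupp : Function.support fC ⊆ Set.range (fun c : ℕ => c + 1) := by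
      intro n hn
      match n with
      | 0 => simp [hfC, Function.mem_support] at hn
      | (m+1) => exact ⟨m, rfl⟩
    rw [← hinj.tsum_eq (f := fC) hsupp]
    congr 1
    funext c
    simp only [hfC, EntireAux.sh]
    push_cast
    ring
  have hcomb : F (sh (sh (sh a))) x - x ^ 2 * F (sh (sh a)) x
      - x * F (sh a) x + F a x
      = ∑' n, (fA n - fB n - fC n + fD n) := by
    rw [hB, hCt]
    rw [Summable.tsum_add ((hSA.sub hSB).sub hSC) hSD, Summable.tsum_sub (hSA.sub hSB) hSC, Summable.tsum_sub hSA hSB]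
    rfl
  rw [hcomb]
  have hzero : ∀ n, fA n - fB n - fC n + fD n = 0 := by
    intro n
    have h3 : sh (sh (sh a)) n = ((n:ℝ)+1) * (((n:ℝ)+2) * (((n:ℝ)+3) * a (n+3))) := by
      simp only [EntireAux.sh]
      push_cast
      ring
    have hr := hrec n
    simp only [hfA, hfB, hfC, hfD, h3]
    have : ((n:ℝ)+1) * (((n:ℝ)+2) * (((n:ℝ)+3) * a (n+3)))
        = ((n:ℝ)-1) * ((n:ℝ)+1) * a n := by linarith [hr]
    rw [this]
    ring
  simp only [hzero]
  exact tsum_zero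

end EntireAux

end EntireAux

open EntireAux in
/-- There exist two entire power-series solutions `y₁ = Σ c_r x^{3r}` and
`y₂ = x² Σ d_r x^{3r}` (with `c₀ = d₀ = 1`) of `y''' − x²y'' − xy' + y = 0` on `ℝ`. -/
theorem exists_entire_series_solutions :
    ∃ (c d : ℕ → ℝ) (y₁ y₂ : ℝ → ℝ),
      c 0 = 1 ∧ d 0 = 1 ∧
      (∀ x : ℝ, Summable fun r : ℕ => c r * x ^ (3 * r)) ∧
      (∀ x : ℝ, Summable fun r : ℕ => d r * x ^ (3 * r)) ∧
      (∀ x : ℝ, y₁ x = ∑' r : ℕ, c r * x ^ (3 * r)) ∧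
      (∀ x : ℝ, y₂ x = x ^ 2 * ∑' r : ℕ, d r * x ^ (3 * r)) ∧
      ContDiff ℝ 3 y₁ ∧ ContDiff ℝ 3 y₂ ∧
      (∀ x : ℝ,
        iteratedDeriv 3 y₁ x - x ^ 2 * iteratedDeriv 2 y₁ x - x * deriv y₁ x + y₁ x = 0) ∧
      (∀ x : ℝ,
        iteratedDeriv 3 y₂ x - x ^ 2 * iteratedDeriv 2 y₂ x - x * deriv y₂ x + y₂ x = 0) := by
  set a : ℕ → ℝ := aseq 1 0 0 with haa
  set b : ℕ → ℝ := aseq 0 0 1 with hbb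
  have haG : Gd 0 a := ⟨1, fun n => by
    simpa using aseq_bound 1 0 0 (by norm_num) (by norm_num) (by norm_num) n⟩
  have hbG : Gd 0 b := ⟨1, fun n => by
    simpa using aseq_bound 0 0 1 (by norm_num) (by norm_num) (by norm_num) n⟩
  refine ⟨fun r => a (3 * r), fun r => b (3 * r + 2), F a, F b, rfl, rfl,
    ?_, ?_, ?_, ?_, Gd.contDiff3 haG, Gd.contDiff3 hbG,
    fun x => F_ode haG (aseq_rec 1 0 0) x, fun x => F_ode hbG (aseq_rec 0 0 1) x⟩
  · -- summability of the c-series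
    intro x
    refine Summable.of_norm_bounded (Real.summable_pow_div_factorial (|x| ^ 3)) fun r => ?_
    have hb := aseq_bound 1 0 0 (by norm_num) (by norm_num) (by norm_num) (3 * r)
    have hq : (3 * r) / 3 = r := by omega
    rw [hq] at hb
    have hfp : (0:ℝ) < (Nat.factorial r : ℝ) := by exact_mod_cast Nat.factorial_pos _
    have h1 : ‖a (3*r) * x ^ (3*r)‖ = |a (3*r)| * |x| ^ (3*r) := by
      rw [norm_mul, norm_pow]; rfl
    rw [h1]
    calc |a (3*r)| * |x| ^ (3*r)
        ≤ (1 / (Nat.factorial r : ℝ)) * |x| ^ (3*r) :=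
          mul_le_mul_of_nonneg_right hb (by positivity)
      _ = (|x| ^ 3) ^ r / (Nat.factorial r : ℝ) := by
          rw [← pow_mul]; ring
  · -- summability of the d-series
    intro x
    refine Summable.of_norm_bounded (Real.summable_pow_div_factorial (|x| ^ 3)) fun r => ?_
    have hb := aseq_bound 0 0 1 (by norm_num) (by norm_num) (by norm_num) (3 * r + 2)
    have hq : (3 * r + 2) / 3 = r := by omega
    rw [hq] at hb
    have hfp : (0:ℝ) < (Nat.factorial r : ℝ) := by exact_mod_cast Nat.factorial_pos _
    have h1 : ‖b (3*r+2) * x ^ (3*r)‖ = |b (3*r+2)| * |x| ^ (3*r) := by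
      rw [norm_mul, norm_pow]; rfl
    rw [h1]
    calc |b (3*r+2)| * |x| ^ (3*r)
        ≤ (1 / (Nat.factorial r : ℝ)) * |x| ^ (3*r) :=
          mul_le_mul_of_nonneg_right hb (by positivity)
      _ ≤ (1 / (Nat.factorial r : ℝ)) * (1 * |x| ^ (3*r)) := by rw [one_mul]
      _ = (|x| ^ 3) ^ r / (Nat.factorial r : ℝ) := by
          rw [← pow_mul]; ring
  · -- y₁ = Σ c_r x^{3r}
    intro x
    rw [F]
    have hinj : Function.Injective (fun r : ℕ => 3 * r) := fun p q h => by simpa using h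
    have hsupp : Function.support (fun n : ℕ => a n * x ^ n)
        ⊆ Set.range (fun r : ℕ => 3 * r) := by
      intro n hn
      by_cases h : n % 3 = 0
      · exact ⟨n / 3, by show 3 * (n / 3) = n; omega⟩
      · exfalso
        exact hn (by show a n * x ^ n = 0; rw [haa, aseq_zero₁ n h, zero_mul])
    exact (hinj.tsum_eq (f := fun n : ℕ => a n * x ^ n) hsupp).symm
  · -- y₂ = x² Σ d_r x^{3r}
    intro x
    rw [F, ← tsum_mul_left]
    have hinj : Function.Injective (fun r : ℕ => 3 * r + 2) := fun p q h => by simpa using h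
    have hsupp : Function.support (fun n : ℕ => b n * x ^ n)
        ⊆ Set.range (fun r : ℕ => 3 * r + 2) := by
      intro n hn
      by_cases h : n % 3 = 2
      · exact ⟨n / 3, by show 3 * (n / 3) + 2 = n; omega⟩
      · exfalso
        exact hn (by show b n * x ^ n = 0; rw [hbb, aseq_zero₂ n h, zero_mul])
    rw [← hinj.tsum_eq (f := fun n : ℕ => b n * x ^ n) hsupp]
    congr 1
    funext r
    rw [pow_add]
    ring
end

section
/- There exists a three-times continuously differentiable function y : ℝ → ℝ solving y'''(x) − x²y''(x) − xy'(x) + y(x) = 0 on ℝ such that x³·exp(−x³/3)·y(x) → 1 as x → +∞ (i.e. y(x) ~ x^{−3}·exp(x³/3) at infinity). -/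
open Filter intervalIntegral

noncomputable def Esol (x : ℝ) : ℝ := Real.exp (x ^ 3 / 3)

noncomputable def Fsol (x : ℝ) : ℝ := ∫ t in (0:ℝ)..x, t * Esol t

noncomputable def ysol (x : ℝ) : ℝ := x * Fsol x - Esol x

lemma Esol_pos (x : ℝ) : 0 < Esol x := Real.exp_pos _

lemma contE : Continuous Esol := by
  unfold Esol; fun_prop

lemma hE (x : ℝ) : HasDerivAt Esol (x ^ 2 * Esol x) x := by
  have h := ((hasDerivAt_pow 3 x).div_const 3).exp
  refine h.congr_deriv ?_
  unfold Esol; ring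

lemma contg : Continuous (fun t : ℝ => t * Esol t) := by
  exact continuous_id.mul contE

lemma hF (x : ℝ) : HasDerivAt Fsol (x * Esol x) x := by
  exact intervalIntegral.integral_hasDerivAt_right
    (contg.intervalIntegrable _ _)
    (contg.stronglyMeasurableAtFilter _ _)
    contg.continuousAt

lemma hy (x : ℝ) : HasDerivAt ysol (Fsol x) x := by
  have h := ((hasDerivAt_id x).mul (hF x)).sub (hE x)
  refine h.congr_deriv ?_
  simp only [id_eq, one_mul]
  ring

lemma deriv_ysol : deriv ysol = Fsol := funext fun x => (hy x).deriv

lemma deriv_Fsol : deriv Fsol = fun x => x * Esol x := funext fun x => (hF x).deriv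

lemma hg' (x : ℝ) : HasDerivAt (fun x : ℝ => x * Esol x) (Esol x + x ^ 3 * Esol x) x := by
  have h := (hasDerivAt_id x).mul (hE x)
  refine h.congr_deriv ?_
  simp [id]; ring

lemma iter2 : iteratedDeriv 2 ysol = fun x => x * Esol x := by
  rw [show (2:ℕ) = 1 + 1 from rfl, iteratedDeriv_succ, iteratedDeriv_one, deriv_ysol, deriv_Fsol]

lemma iter3 (x : ℝ) : iteratedDeriv 3 ysol x = Esol x + x ^ 3 * Esol x := by
  rw [show (3:ℕ) = 2 + 1 from rfl, iteratedDeriv_succ, iter2]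
  exact (hg' x).deriv

lemma hEsm {n : WithTop ℕ∞} : ContDiff ℝ n Esol :=
  Real.contDiff_exp.comp ((contDiff_id.pow 3).div_const 3)

lemma contdiff_ysol : ContDiff ℝ 3 ysol := by
  have hgsm : ContDiff ℝ 2 (fun x : ℝ => x * Esol x) := contDiff_id.mul hEsm
  have hF3 : ContDiff ℝ 3 Fsol := by
    have h3 : (3 : WithTop ℕ∞) = 2 + 1 := by norm_num
    rw [h3, contDiff_succ_iff_deriv]
    refine ⟨fun x => (hF x).differentiableAt, by simp, ?_⟩
    rw [deriv_Fsol]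
    exact hgsm
  exact (contDiff_id.mul hF3).sub hEsm

lemma ode (x : ℝ) :
    iteratedDeriv 3 ysol x - x ^ 2 * iteratedDeriv 2 ysol x - x * deriv ysol x + ysol x = 0 := by
  rw [iter3, iter2, deriv_ysol]
  unfold ysol
  ring

-- derivatives of Esol t / t^n away from 0
lemma hEd1 {t : ℝ} (ht : t ≠ 0) :
    HasDerivAt (fun t => Esol t / t) (t * Esol t - Esol t / t ^ 2) t := by
  have h := (hE t).div (hasDerivAt_pow 1 t) (pow_ne_zero 1 ht)
  simp only [pow_one] at h
  refine h.congr_deriv ?_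
  field_simp
  ring

lemma hEd4 {t : ℝ} (ht : t ≠ 0) :
    HasDerivAt (fun t => Esol t / t ^ 4) (Esol t / t ^ 2 - 4 * (Esol t / t ^ 5)) t := by
  have h := (hE t).div (hasDerivAt_pow 4 t) (pow_ne_zero 4 ht)
  refine h.congr_deriv ?_
  field_simp
  ring

lemma hEd7 {t : ℝ} (ht : t ≠ 0) :
    HasDerivAt (fun t => Esol t / t ^ 7) (Esol t / t ^ 5 - 7 * (Esol t / t ^ 8)) t := by
  have h := (hE t).div (hasDerivAt_pow 7 t) (pow_ne_zero 7 ht)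
  refine h.congr_deriv ?_
  field_simp
  ring

lemma contOnDiv (n : ℕ) {s : Set ℝ} (h : ∀ t ∈ s, t ≠ 0) :
    ContinuousOn (fun t => Esol t / t ^ n) s :=
  ContinuousOn.div contE.continuousOn (continuous_pow n).continuousOn
    (fun t ht => pow_ne_zero n (h t ht))

lemma ne_zero_of_uIcc {a x t : ℝ} (ha : (0:ℝ) < a) (hx : a ≤ x) (ht : t ∈ Set.uIcc a x) :
    t ≠ 0 := by
  rw [Set.uIcc_of_le hx] at ht
  exact ne_of_gt (lt_of_lt_of_le ha ht.1)

lemma intA {x : ℝ} (hx : 1 ≤ x) :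
    ∫ t in (1:ℝ)..x, t * Esol t
      = Esol x / x - Esol 1 + ∫ t in (1:ℝ)..x, Esol t / t ^ 2 := by
  have hne : ∀ t ∈ Set.uIcc (1:ℝ) x, t ≠ 0 := fun t ht => ne_zero_of_uIcc one_pos hx ht
  have h2 : IntervalIntegrable (fun t => Esol t / t ^ 2) MeasureTheory.volume 1 x :=
    (contOnDiv 2 hne).intervalIntegrable
  have hg : IntervalIntegrable (fun t => t * Esol t) MeasureTheory.volume 1 x :=
    contg.intervalIntegrable _ _
  have hftc : ∫ t in (1:ℝ)..x, (t * Esol t - Esol t / t ^ 2) = Esol x / x - Esol 1 / 1 :=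
    intervalIntegral.integral_eq_sub_of_hasDerivAt
      (fun t ht => hEd1 (hne t ht)) (hg.sub h2)
  rw [intervalIntegral.integral_sub hg h2] at hftc
  have : Esol 1 / 1 = Esol 1 := by ring
  linarith [hftc]

lemma intB {x : ℝ} (hx : 1 ≤ x) :
    ∫ t in (1:ℝ)..x, Esol t / t ^ 2
      = Esol x / x ^ 4 - Esol 1 + 4 * ∫ t in (1:ℝ)..x, Esol t / t ^ 5 := by
  have hne : ∀ t ∈ Set.uIcc (1:ℝ) x, t ≠ 0 := fun t ht => ne_zero_of_uIcc one_pos hx ht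
  have h2 : IntervalIntegrable (fun t => Esol t / t ^ 2) MeasureTheory.volume 1 x :=
    (contOnDiv 2 hne).intervalIntegrable
  have h5 : IntervalIntegrable (fun t => Esol t / t ^ 5) MeasureTheory.volume 1 x :=
    (contOnDiv 5 hne).intervalIntegrable
  have hftc : ∫ t in (1:ℝ)..x, (Esol t / t ^ 2 - 4 * (Esol t / t ^ 5))
      = Esol x / x ^ 4 - Esol 1 / 1 ^ 4 :=
    intervalIntegral.integral_eq_sub_of_hasDerivAt
      (fun t ht => hEd4 (hne t ht)) (h2.sub (h5.const_mul 4))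
  rw [intervalIntegral.integral_sub h2 (h5.const_mul 4),
    intervalIntegral.integral_const_mul] at hftc
  have : Esol 1 / 1 ^ 4 = Esol 1 := by norm_num
  linarith [hftc]

lemma Fsol_eq {x : ℝ} : Fsol x = Fsol 1 + ∫ t in (1:ℝ)..x, t * Esol t := by
  have h1 : IntervalIntegrable (fun t : ℝ => t * Esol t) MeasureTheory.volume 0 1 :=
    contg.intervalIntegrable _ _
  have h2 : IntervalIntegrable (fun t : ℝ => t * Esol t) MeasureTheory.volume 1 x :=
    contg.intervalIntegrable _ _
  have h := intervalIntegral.integral_add_adjacent_intervals h1 h2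
  unfold Fsol
  linarith [h]

lemma ysol_eq {x : ℝ} (hx : 1 ≤ x) :
    ysol x = x * (Fsol 1 - 2 * Esol 1) + Esol x / x ^ 3
      + 4 * x * ∫ t in (1:ℝ)..x, Esol t / t ^ 5 := by
  have hx0 : x ≠ 0 := by positivity
  unfold ysol
  rw [Fsol_eq, intA hx, intB hx]
  field_simp
  ring

lemma R_nonneg {x : ℝ} (hx : 1 ≤ x) : 0 ≤ ∫ t in (1:ℝ)..x, Esol t / t ^ 5 := by
  refine intervalIntegral.integral_nonneg hx (fun t ht => ?_)
  have h1 : (1:ℝ) ≤ t := ht.1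
  have := Esol_pos t
  positivity

lemma R_bound {x : ℝ} (hx : 2 ≤ x) :
    ∫ t in (1:ℝ)..x, Esol t / t ^ 5
      ≤ (∫ t in (1:ℝ)..(2:ℝ), Esol t / t ^ 5) + 8 * (Esol x / x ^ 7) := by
  have hne12 : ∀ t ∈ Set.uIcc (1:ℝ) (2:ℝ), t ≠ 0 :=
    fun t ht => ne_zero_of_uIcc one_pos one_le_two ht
  have hne2x : ∀ t ∈ Set.uIcc (2:ℝ) x, t ≠ 0 :=
    fun t ht => ne_zero_of_uIcc two_pos hx ht
  have h12 : IntervalIntegrable (fun t => Esol t / t ^ 5) MeasureTheory.volume 1 2 :=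
    (contOnDiv 5 hne12).intervalIntegrable
  have h2x5 : IntervalIntegrable (fun t => Esol t / t ^ 5) MeasureTheory.volume 2 x :=
    (contOnDiv 5 hne2x).intervalIntegrable
  have h2x8 : IntervalIntegrable (fun t => Esol t / t ^ 8) MeasureTheory.volume 2 x :=
    (contOnDiv 8 hne2x).intervalIntegrable
  have hsplit : ∫ t in (1:ℝ)..x, Esol t / t ^ 5
      = (∫ t in (1:ℝ)..(2:ℝ), Esol t / t ^ 5) + ∫ t in (2:ℝ)..x, Esol t / t ^ 5 :=
    (intervalIntegral.integral_add_adjacent_intervals h12 h2x5).symm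
  rw [hsplit]
  have hmono : ∫ t in (2:ℝ)..x, Esol t / t ^ 5
      ≤ ∫ t in (2:ℝ)..x, 8 * (Esol t / t ^ 5 - 7 * (Esol t / t ^ 8)) := by
    refine intervalIntegral.integral_mono_on hx h2x5 ((h2x5.sub (h2x8.const_mul 7)).const_mul 8)
      (fun t ht => ?_)
    have h2t : (2:ℝ) ≤ t := ht.1
    have ht0 : (0:ℝ) < t := by linarith
    have hEp : (0:ℝ) < Esol t := Esol_pos t
    have hkey : 8 * (Esol t / t ^ 5 - 7 * (Esol t / t ^ 8)) - Esol t / t ^ 5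
        = 7 * Esol t * (t ^ 3 - 8) / t ^ 8 := by
      field_simp
      ring
    have ht3 : (8:ℝ) ≤ t ^ 3 := by nlinarith [sq_nonneg (t - 2), sq_nonneg t]
    have : 0 ≤ 7 * Esol t * (t ^ 3 - 8) / t ^ 8 :=
      div_nonneg (mul_nonneg (by positivity) (by linarith)) (by positivity)
    linarith
  have hftc : ∫ t in (2:ℝ)..x, (Esol t / t ^ 5 - 7 * (Esol t / t ^ 8))
      = Esol x / x ^ 7 - Esol 2 / 2 ^ 7 :=
    intervalIntegral.integral_eq_sub_of_hasDerivAt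
      (fun t ht => hEd7 (hne2x t ht)) (h2x5.sub (h2x8.const_mul 7))
  rw [intervalIntegral.integral_const_mul, hftc] at hmono
  have hE2 : (0:ℝ) ≤ Esol 2 / 2 ^ 7 := div_nonneg (Esol_pos 2).le (by norm_num)
  nlinarith [hmono]

lemma L1 : Tendsto (fun x : ℝ => x ^ 4 * Real.exp (-x ^ 3 / 3)) atTop (nhds 0) := by
  have h2 : Tendsto (fun x : ℝ => x ^ 3 / 3) atTop atTop :=
    (tendsto_pow_atTop (by norm_num)).atTop_div_const (by norm_num)
  have h3 := (Real.tendsto_pow_mul_exp_neg_atTop_nhds_zero 2).comp h2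
  have h4 : Tendsto (fun x : ℝ => 9 * ((x ^ 3 / 3) ^ 2 * Real.exp (-(x ^ 3 / 3))))
      atTop (nhds 0) := by
    have := h3.const_mul (9:ℝ)
    simpa using this
  refine tendsto_of_tendsto_of_tendsto_of_le_of_le' tendsto_const_nhds h4 ?_ ?_
  · filter_upwards [eventually_ge_atTop (1:ℝ)] with x hx
    positivity
  · filter_upwards [eventually_ge_atTop (1:ℝ)] with x hx
    have hpow : x ^ 4 ≤ x ^ 6 := pow_le_pow_right₀ hx (by norm_num)
    have hexp : (0:ℝ) ≤ Real.exp (-x ^ 3 / 3) := (Real.exp_pos _).le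
    have h9 : 9 * ((x ^ 3 / 3) ^ 2 * Real.exp (-(x ^ 3 / 3)))
        = x ^ 6 * Real.exp (-x ^ 3 / 3) := by
      rw [neg_div]
      ring
    rw [h9]
    exact mul_le_mul_of_nonneg_right hpow hexp

lemma L2 : Tendsto (fun x : ℝ => 32 / x ^ 3) atTop (nhds 0) :=
  tendsto_const_nhds.div_atTop (tendsto_pow_atTop (by norm_num))

lemma main_limit :
    Tendsto (fun x : ℝ => x ^ 3 * Real.exp (-x ^ 3 / 3) * ysol x) atTop (nhds 1) := by
  set c : ℝ := Fsol 1 - 2 * Esol 1 with hc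
  set R2 : ℝ := ∫ t in (1:ℝ)..(2:ℝ), Esol t / t ^ 5 with hR2
  have hR2nn : 0 ≤ R2 := R_nonneg one_le_two
  set q : ℝ → ℝ := fun x =>
    x ^ 4 * Real.exp (-x ^ 3 / 3) * (c + 4 * ∫ t in (1:ℝ)..x, Esol t / t ^ 5) with hq
  have hexpE : ∀ x : ℝ, Real.exp (-x ^ 3 / 3) = (Esol x)⁻¹ := by
    intro x
    rw [neg_div, Real.exp_neg]
    rfl
  -- eventual equality
  have key : ∀ x : ℝ, 1 ≤ x → x ^ 3 * Real.exp (-x ^ 3 / 3) * ysol x = 1 + q x := by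
    intro x hx
    have hx0 : x ≠ 0 := ne_of_gt (by linarith)
    have hE0 : Esol x ≠ 0 := (Esol_pos x).ne'
    have hqx : q x = x ^ 4 * (Esol x)⁻¹ * (c + 4 * ∫ t in (1:ℝ)..x, Esol t / t ^ 5) := by
      simp only [hq]
      rw [hexpE]
    rw [ysol_eq hx, hqx, hexpE]
    field_simp
    ring
  -- bound for q
  set b : ℝ → ℝ := fun x => (|c| + 4 * R2) * (x ^ 4 * Real.exp (-x ^ 3 / 3)) + 32 / x ^ 3
    with hb
  have hblim : Tendsto b atTop (nhds 0) := by
    have h1 := (L1.const_mul (|c| + 4 * R2)).add L2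
    simpa using h1
  have hqlim : Tendsto q atTop (nhds 0) := by
    refine tendsto_of_tendsto_of_tendsto_of_le_of_le' (g := fun x => -b x) (h := b)
      (by simpa using hblim.neg) hblim ?_ ?_
    · filter_upwards [eventually_ge_atTop (2:ℝ)] with x hx
      have hx1 : (1:ℝ) ≤ x := by linarith
      have hA : (0:ℝ) ≤ x ^ 4 * Real.exp (-x ^ 3 / 3) := by positivity
      have hRnn := R_nonneg hx1
      have h32 : (0:ℝ) ≤ 32 / x ^ 3 := by positivity
      have hcl : -|c| ≤ c := neg_abs_le c
      have hlow : -( |c| + 4 * R2) ≤ c + 4 * ∫ t in (1:ℝ)..x, Esol t / t ^ 5 := by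
        nlinarith
      have := mul_le_mul_of_nonneg_left hlow hA
      simp only [hq, hb]
      nlinarith [this]
    · filter_upwards [eventually_ge_atTop (2:ℝ)] with x hx
      have hx1 : (1:ℝ) ≤ x := by linarith
      have hx0 : (0:ℝ) < x := by linarith
      have hA : (0:ℝ) ≤ x ^ 4 * Real.exp (-x ^ 3 / 3) := by positivity
      have hRb := R_bound hx
      have hcu : c ≤ |c| := le_abs_self c
      have hup : c + 4 * ∫ t in (1:ℝ)..x, Esol t / t ^ 5
          ≤ (|c| + 4 * R2) + 32 * (Esol x / x ^ 7) := by
        nlinarith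
      have hmul := mul_le_mul_of_nonneg_left hup hA
      have hid : x ^ 4 * Real.exp (-x ^ 3 / 3) * (32 * (Esol x / x ^ 7)) = 32 / x ^ 3 := by
        rw [hexpE]
        have hE0 : Esol x ≠ 0 := (Esol_pos x).ne'
        field_simp
      simp only [hq, hb]
      nlinarith [hmul, hid]
  have hfin : Tendsto (fun x : ℝ => 1 + q x) atTop (nhds 1) := by
    have := tendsto_const_nhds (α := ℝ) (x := (1:ℝ)) (f := atTop) |>.add hqlim
    simpa using this
  refine hfin.congr' ?_
  filter_upwards [eventually_ge_atTop (1:ℝ)] with x hx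
  exact (key x hx).symm

/-- There is a solution of `y''' − x²y'' − xy' + y = 0` on `ℝ` with
`y(x) ~ x⁻³·exp(x³/3)` as `x → +∞`. -/
theorem exists_dominant_solution :
    ∃ y : ℝ → ℝ, ContDiff ℝ 3 y ∧
      (∀ x : ℝ,
        iteratedDeriv 3 y x - x ^ 2 * iteratedDeriv 2 y x - x * deriv y x + y x = 0) ∧
      Tendsto (fun x : ℝ => x ^ 3 * Real.exp (-x ^ 3 / 3) * y x) atTop (nhds 1) :=
  ⟨ysol, contdiff_ysol, ode, main_limit⟩
end

section
/- There exists a three-times continuously differentiable function y : ℝ → ℝ solving y'''(x) − x²y''(x) − xy'(x) + y(x) = 0 on ℝ such that x·y(x) → 1 as x → +∞ (i.e. y(x) ~ x^{−1} at infinity) and y(0) = 2·3^{−1/3}·Γ(2/3), where Γ denotes the real Gamma function. -/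
open Real Set MeasureTheory Filter

namespace Subdom

noncomputable def E (t : ℝ) : ℝ := Real.exp (-(t^3)/3)

lemma E_pos (t : ℝ) : 0 < E t := Real.exp_pos _

lemma E_cont : Continuous E := by unfold E; continuity

lemma hasDerivAt_E (t : ℝ) : HasDerivAt E (-(t^2) * E t) t := by
  have h : HasDerivAt (fun s : ℝ => -(s^3)/3) (-(t^2)) t := by
    have := ((hasDerivAt_pow 3 t).neg.div_const 3)
    convert (config := { preTransparency := .default }) this using 1
    ring
  unfold E
  simpa [E, mul_comm] using h.exp

lemma E_tendsto : Tendsto E atTop (nhds 0) := by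
  apply Real.tendsto_exp_atBot.comp
  have h1 : Tendsto (fun t : ℝ => t^3) atTop atTop := tendsto_pow_atTop (by norm_num)
  have h2 := (h1.atTop_div_const (by norm_num : (0:ℝ) < 3))
  have h3 : Tendsto (fun t : ℝ => -(t^3)/3) atTop atBot := by
    simp only [neg_div]
    exact tendsto_neg_atBot_iff.mpr h2
  exact h3

lemma expEone (t : ℝ) : Real.exp (t^3/3) * E t = 1 := by
  rw [E, ← Real.exp_add]
  norm_num [Real.exp_zero, neg_div]

-- key: integral of s^2 * E over tail
lemma integrableOn_sqE (a : ℝ) : IntegrableOn (fun s => s^2 * E s) (Ioi a) := by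
  have hderiv : ∀ x ∈ Ici a, HasDerivAt (fun s => -E s) (x^2 * E x) x := by
    intro x _
    convert (config := { preTransparency := .default }) (hasDerivAt_E x).neg using 1
    ring
  exact integrableOn_Ioi_deriv_of_nonneg' hderiv
    (fun x hx => mul_nonneg (sq_nonneg x) (E_pos x).le) (E_tendsto.neg)

lemma integral_sqE (a : ℝ) : ∫ s in Ioi a, s^2 * E s = E a := by
  have hderiv : ∀ x ∈ Ici a, HasDerivAt (fun s => -E s) (x^2 * E x) x := by
    intro x _
    convert (config := { preTransparency := .default }) (hasDerivAt_E x).neg using 1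
    ring
  have := integral_Ioi_of_hasDerivAt_of_tendsto' hderiv (integrableOn_sqE a) E_tendsto.neg
  simpa using this


/-- derivative of a tail integral -/
lemma hasDerivAt_tail (g : ℝ → ℝ) (hg : Continuous g)
    (hint : ∀ a : ℝ, IntegrableOn g (Ioi a)) (x : ℝ) :
    HasDerivAt (fun u => ∫ t in Ioi u, g t) (-g x) x := by
  set a := x - 1 with ha
  have key : ∀ u ∈ Ioi a, (∫ t in Ioi u, g t)
      = (∫ t in Ioi a, g t) - ∫ t in a..u, g t := by
    intro u hu
    have hu' : a ≤ u := le_of_lt hu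
    rw [intervalIntegral.integral_of_le hu']
    have hsplit := MeasureTheory.setIntegral_union (Set.Ioc_disjoint_Ioi le_rfl)
      measurableSet_Ioi ((hint a).mono_set Set.Ioc_subset_Ioi_self) (hint u)
      (f := g) (μ := volume)
    rw [Set.Ioc_union_Ioi_eq_Ioi hu'] at hsplit
    rw [hsplit]; ring
  have hd : HasDerivAt (fun u => (∫ t in Ioi a, g t) - ∫ t in a..u, g t) (-g x) x := by
    have h1 := intervalIntegral.integral_hasDerivAt_right
      (hg.intervalIntegrable a x)
      (hg.stronglyMeasurableAtFilter volume (nhds x)) hg.continuousAt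
    simpa using h1.const_sub _
  apply hd.congr_of_eventuallyEq
  filter_upwards [Ioi_mem_nhds (by simp [ha] : a < x)] with u hu
  exact key u hu

noncomputable def F (x : ℝ) : ℝ := ∫ t in Ioi x, t * E t

lemma integrableOn_tE (a : ℝ) : IntegrableOn (fun t => t * E t) (Ioi a) := by
  have hsub : Ioi a ⊆ Ioc a 1 ∪ Ioi 1 := by
    intro t ht
    rcases le_or_gt t 1 with h | h
    · exact Or.inl ⟨ht, h⟩
    · exact Or.inr h
  apply IntegrableOn.mono_set _ hsub
  apply IntegrableOn.union
  · exact (continuous_id.mul E_cont).integrableOn_Ioc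
  · apply Integrable.mono (integrableOn_sqE 1)
    · exact ((continuous_id.mul E_cont).aestronglyMeasurable).restrict
    · refine (ae_restrict_iff' measurableSet_Ioi).2 (ae_of_all _ fun t ht => ?_)
      have ht1 : (1:ℝ) ≤ t := le_of_lt ht
      have h0 : (0:ℝ) < t := lt_of_lt_of_le one_pos ht1
      rw [Real.norm_eq_abs, Real.norm_eq_abs,
        abs_of_nonneg (mul_nonneg h0.le (E_pos t).le),
        abs_of_nonneg (mul_nonneg (sq_nonneg t) (E_pos t).le)]
      have : t ≤ t^2 := by nlinarith
      exact mul_le_mul_of_nonneg_right this (E_pos t).le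

lemma hasDerivAt_F (x : ℝ) : HasDerivAt F (-(x * E x)) x :=
  hasDerivAt_tail _ (continuous_id.mul E_cont) integrableOn_tE x

lemma F_cont : Continuous F := by
  have : Differentiable ℝ F := fun x => (hasDerivAt_F x).differentiableAt
  exact this.continuous


lemma tendsto_one_div_pow (k : ℕ) (hk : k ≠ 0) :
    Tendsto (fun s : ℝ => 1/s^k) atTop (nhds 0) := by
  have h := (tendsto_pow_atTop hk (α := ℝ)).inv_tendsto_atTop
  simpa [one_div, Pi.inv_def] using h

lemma hasDerivAt_anti1 {s : ℝ} (hs : 1 ≤ s) :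
    HasDerivAt (fun u : ℝ => -(E u * (1/u - 1/u^4))) ((s - 4/s^5) * E s) s := by
  have h0 : s ≠ 0 := by positivity
  have hinner : HasDerivAt (fun u : ℝ => 1/u - 1/u^4) (-(1/s^2) + 4/s^5) s := by
    have h1 : HasDerivAt (fun u : ℝ => 1/u) (-(1/s^2)) s := by
      simpa [one_div] using (hasDerivAt_inv h0)
    have h2 : HasDerivAt (fun u : ℝ => 1/u^4) (-(4/s^5)) s := by
      have := (hasDerivAt_pow 4 s).inv (by positivity)
      simp only [one_div]
      convert (config := { preTransparency := .default }) this using 1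
      field_simp
      ring
    convert (config := { preTransparency := .default }) h1.sub h2 using 1
    ring
  have := ((hasDerivAt_E s).mul hinner).neg
  convert (config := { preTransparency := .default }) this using 1
  field_simp
  ring

lemma hasDerivAt_anti2 {s : ℝ} (hs : 1 ≤ s) :
    HasDerivAt (fun u : ℝ => -(E u * (1/u - 1/u^4 + 4/u^7))) ((s + 28/s^8) * E s) s := by
  have h0 : s ≠ 0 := by positivity
  have hinner : HasDerivAt (fun u : ℝ => 1/u - 1/u^4 + 4/u^7)
      (-(1/s^2) + 4/s^5 - 28/s^8) s := by
    have h1 : HasDerivAt (fun u : ℝ => 1/u) (-(1/s^2)) s := by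
      simpa [one_div] using (hasDerivAt_inv h0)
    have h2 : HasDerivAt (fun u : ℝ => 1/u^4) (-(4/s^5)) s := by
      have := (hasDerivAt_pow 4 s).inv (by positivity)
      simp only [one_div]
      convert (config := { preTransparency := .default }) this using 1
      field_simp
      ring
    have h3 : HasDerivAt (fun u : ℝ => 4/u^7) (-(28/s^8)) s := by
      have := ((hasDerivAt_pow 7 s).inv (by positivity)).const_mul (4:ℝ)
      simp only [div_eq_mul_inv] at *
      convert (config := { preTransparency := .default }) this using 1
      field_simp
      ring
    have := (h1.sub h2).add h3
    convert (config := { preTransparency := .default }) this using 1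
    ring
  have := ((hasDerivAt_E s).mul hinner).neg
  convert (config := { preTransparency := .default }) this using 1
  field_simp
  ring

lemma tendsto_anti1 : Tendsto (fun u : ℝ => -(E u * (1/u - 1/u^4))) atTop (nhds 0) := by
  have := E_tendsto.mul ((tendsto_one_div_pow 1 one_ne_zero).sub (tendsto_one_div_pow 4 (by norm_num)))
  simpa using this.neg

lemma tendsto_anti2 : Tendsto (fun u : ℝ => -(E u * (1/u - 1/u^4 + 4/u^7))) atTop (nhds 0) := by
  have h7 := (tendsto_one_div_pow 7 (by norm_num)).const_mul (4:ℝ)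
  have := E_tendsto.mul (((tendsto_one_div_pow 1 one_ne_zero).sub
    (tendsto_one_div_pow 4 (by norm_num))).add (by simpa [mul_one_div] using h7))
  simpa [div_eq_mul_inv] using this.neg

lemma integrableOn_anti1 {a : ℝ} (ha : 1 ≤ a) :
    IntegrableOn (fun s : ℝ => (s - 4/s^5) * E s) (Ioi a) := by
  apply Integrable.mono ((integrableOn_sqE a).const_mul 29)
  · apply ContinuousOn.aestronglyMeasurable _ measurableSet_Ioi
    apply ContinuousOn.mul _ E_cont.continuousOn
    apply ContinuousOn.sub continuousOn_id
    exact ContinuousOn.div continuousOn_const (continuous_pow 5).continuousOn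
      (fun t ht => by
        have : (1:ℝ) < t := lt_of_le_of_lt ha ht
        positivity)
  · refine (ae_restrict_iff' measurableSet_Ioi).2 (ae_of_all _ fun t ht => ?_)
    have ht1 : (1:ℝ) < t := lt_of_le_of_lt ha ht
    have h0 : (0:ℝ) < t := lt_trans one_pos ht1
    rw [Real.norm_eq_abs, Real.norm_eq_abs, abs_mul, abs_of_nonneg (E_pos t).le,
      abs_of_nonneg (mul_nonneg (by norm_num) (mul_nonneg (sq_nonneg t) (E_pos t).le))]
    have h5 : 4/t^5 ≤ 4*t^2 := by
      rw [div_le_iff₀ (by positivity)]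
      nlinarith [pow_le_pow_right₀ ht1.le (by norm_num : 2 ≤ 7)]
    have habs : |t - 4/t^5| ≤ 29 * t^2 := by
      rw [abs_le]
      constructor
      · nlinarith [sq_nonneg t]
      · nlinarith [sq_nonneg t, (by positivity : (0:ℝ) < 4/t^5)]
    calc |t - 4/t^5| * E t ≤ 29*t^2 * E t := mul_le_mul_of_nonneg_right habs (E_pos t).le
      _ = 29 * (t^2 * E t) := by ring

lemma integrableOn_anti2 {a : ℝ} (ha : 1 ≤ a) :
    IntegrableOn (fun s : ℝ => (s + 28/s^8) * E s) (Ioi a) := by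
  apply Integrable.mono ((integrableOn_sqE a).const_mul 29)
  · apply ContinuousOn.aestronglyMeasurable _ measurableSet_Ioi
    apply ContinuousOn.mul _ E_cont.continuousOn
    apply ContinuousOn.add continuousOn_id
    exact ContinuousOn.div continuousOn_const (continuous_pow 8).continuousOn
      (fun t ht => by
        have : (1:ℝ) < t := lt_of_le_of_lt ha ht
        positivity)
  · refine (ae_restrict_iff' measurableSet_Ioi).2 (ae_of_all _ fun t ht => ?_)
    have ht1 : (1:ℝ) < t := lt_of_le_of_lt ha ht
    have h0 : (0:ℝ) < t := lt_trans one_pos ht1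
    rw [Real.norm_eq_abs, Real.norm_eq_abs, abs_mul, abs_of_nonneg (E_pos t).le,
      abs_of_nonneg (mul_nonneg (by norm_num) (mul_nonneg (sq_nonneg t) (E_pos t).le))]
    have h8 : 28/t^8 ≤ 28*t^2 := by
      rw [div_le_iff₀ (by positivity)]
      nlinarith [pow_le_pow_right₀ ht1.le (by norm_num : 2 ≤ 10)]
    have habs : |t + 28/t^8| ≤ 29 * t^2 := by
      rw [abs_of_nonneg (by positivity)]
      nlinarith [sq_nonneg t]
    calc |t + 28/t^8| * E t ≤ 29*t^2 * E t := mul_le_mul_of_nonneg_right habs (E_pos t).le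
      _ = 29 * (t^2 * E t) := by ring

lemma integral_anti1 {a : ℝ} (ha : 1 ≤ a) :
    ∫ s in Ioi a, (s - 4/s^5) * E s = E a * (1/a - 1/a^4) := by
  have := integral_Ioi_of_hasDerivAt_of_tendsto'
    (fun x hx => hasDerivAt_anti1 (le_trans ha hx)) (integrableOn_anti1 ha) tendsto_anti1
  simpa using this

lemma integral_anti2 {a : ℝ} (ha : 1 ≤ a) :
    ∫ s in Ioi a, (s + 28/s^8) * E s = E a * (1/a - 1/a^4 + 4/a^7) := by
  have := integral_Ioi_of_hasDerivAt_of_tendsto'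
    (fun x hx => hasDerivAt_anti2 (le_trans ha hx)) (integrableOn_anti2 ha) tendsto_anti2
  simpa using this

lemma le_F {a : ℝ} (ha : 1 ≤ a) : E a * (1/a - 1/a^4) ≤ F a := by
  rw [← integral_anti1 ha]
  apply setIntegral_mono_on (integrableOn_anti1 ha) (integrableOn_tE a) measurableSet_Ioi
  intro t ht
  have ht1 : (1:ℝ) < t := lt_of_le_of_lt ha ht
  have h0 : (0:ℝ) < t := lt_trans one_pos ht1
  have : t - 4/t^5 ≤ t := by
    have : (0:ℝ) < 4/t^5 := by positivity
    linarith
  exact mul_le_mul_of_nonneg_right this (E_pos t).le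

lemma F_le {a : ℝ} (ha : 1 ≤ a) : F a ≤ E a * (1/a - 1/a^4 + 4/a^7) := by
  rw [← integral_anti2 ha]
  apply setIntegral_mono_on (integrableOn_tE a) (integrableOn_anti2 ha) measurableSet_Ioi
  intro t ht
  have ht1 : (1:ℝ) < t := lt_of_le_of_lt ha ht
  have h0 : (0:ℝ) < t := lt_trans one_pos ht1
  have : t ≤ t + 28/t^8 := by
    have : (0:ℝ) < 28/t^8 := by positivity
    linarith
  exact mul_le_mul_of_nonneg_right this (E_pos t).le


noncomputable def G (t : ℝ) : ℝ := t * Real.exp (t^3/3) * F t - 1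

lemma G_cont : Continuous G := by
  unfold G
  exact (((continuous_id.mul (by continuity)).mul F_cont).sub continuous_const)

lemma le_G {a : ℝ} (ha : 1 ≤ a) : -(1/a^3) ≤ G a := by
  have h0 : (0:ℝ) < a := lt_of_lt_of_le one_pos ha
  have hpos : (0:ℝ) ≤ a * Real.exp (a^3/3) := by positivity
  have h := mul_le_mul_of_nonneg_left (le_F ha) hpos
  have heq : a * Real.exp (a^3/3) * (E a * (1/a - 1/a^4)) = 1 - 1/a^3 := by
    have hE := expEone a
    calc a * Real.exp (a^3/3) * (E a * (1/a - 1/a^4))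
        = (Real.exp (a^3/3) * E a) * (a * (1/a - 1/a^4)) := by ring
      _ = a * (1/a - 1/a^4) := by rw [hE]; ring
      _ = 1 - 1/a^3 := by field_simp
  rw [heq] at h
  unfold G
  linarith

lemma G_le {a : ℝ} (ha : 1 ≤ a) : G a ≤ -(1/a^3) + 4/a^6 := by
  have h0 : (0:ℝ) < a := lt_of_lt_of_le one_pos ha
  have hpos : (0:ℝ) ≤ a * Real.exp (a^3/3) := by positivity
  have h := mul_le_mul_of_nonneg_left (F_le ha) hpos
  have heq : a * Real.exp (a^3/3) * (E a * (1/a - 1/a^4 + 4/a^7)) = 1 - 1/a^3 + 4/a^6 := by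
    have hE := expEone a
    calc a * Real.exp (a^3/3) * (E a * (1/a - 1/a^4 + 4/a^7))
        = (Real.exp (a^3/3) * E a) * (a * (1/a - 1/a^4 + 4/a^7)) := by ring
      _ = a * (1/a - 1/a^4 + 4/a^7) := by rw [hE]; ring
      _ = 1 - 1/a^3 + 4/a^6 := by field_simp
  rw [heq] at h
  unfold G
  linarith

lemma abs_G_le {t : ℝ} (ht : 1 ≤ t) : |G t| ≤ 3 * (1/t^3) := by
  have h0 : (0:ℝ) < t := lt_of_lt_of_le one_pos ht
  have h36 : 1/t^6 ≤ 1/t^3 := by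
    apply div_le_div_of_nonneg_left one_pos.le (by positivity)
    exact pow_le_pow_right₀ ht (by norm_num)
  have h1 := le_G ht
  have h2 := G_le ht
  rw [abs_le]
  constructor
  · have : (0:ℝ) < 1/t^3 := by positivity
    linarith
  · have : 4/t^6 ≤ 4 * (1/t^3) := by
      rw [div_eq_mul_one_div]
      linarith
    have h3 : (0:ℝ) < 1/t^3 := by positivity
    linarith

lemma hasDerivAt_invcube {u : ℝ} (hu : 0 < u) :
    HasDerivAt (fun v : ℝ => -(1/(2*v^2))) (1/u^3) u := by
  have h0 : u ≠ 0 := ne_of_gt hu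
  have := (((hasDerivAt_pow 2 u).const_mul (2:ℝ)).inv (by positivity)).neg
  convert (config := { preTransparency := .default }) this using 1
  · funext v
    rw [one_div]
    rfl
  · rw [neg_div, neg_neg, div_eq_div_iff (by positivity) (by positivity)]
    push_cast
    ring

lemma tendsto_invcube_anti : Tendsto (fun v : ℝ => -(1/(2*v^2))) atTop (nhds 0) := by
  have h := ((tendsto_one_div_pow 2 (by norm_num)).const_mul ((1:ℝ)/2)).neg
  rw [mul_zero, neg_zero] at h
  exact h.congr (fun v => by ring)

lemma tendsto_invsix_anti : Tendsto (fun v : ℝ => -(4/(5*v^5))) atTop (nhds 0) := by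
  have h := ((tendsto_one_div_pow 5 (by norm_num)).const_mul ((4:ℝ)/5)).neg
  rw [mul_zero, neg_zero] at h
  exact h.congr (fun v => by ring)

lemma integrableOn_invcube {a : ℝ} (ha : 0 < a) :
    IntegrableOn (fun t : ℝ => 1/t^3) (Ioi a) := by
  exact integrableOn_Ioi_deriv_of_nonneg' (fun x hx => hasDerivAt_invcube (lt_of_lt_of_le ha hx))
    (fun x hx => le_of_lt (by have : 0 < x := lt_trans ha hx; positivity)) tendsto_invcube_anti

lemma integral_invcube {a : ℝ} (ha : 0 < a) :
    ∫ t in Ioi a, 1/t^3 = 1/(2*a^2) := by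
  have h := integral_Ioi_of_hasDerivAt_of_tendsto'
    (fun x hx => hasDerivAt_invcube (lt_of_lt_of_le ha hx)) (integrableOn_invcube ha)
    tendsto_invcube_anti
  simpa using h

lemma hasDerivAt_invsix {u : ℝ} (hu : 0 < u) :
    HasDerivAt (fun v : ℝ => -(4/(5*v^5))) (4/u^6) u := by
  have h0 : u ≠ 0 := ne_of_gt hu
  have := ((((hasDerivAt_pow 5 u).const_mul (5:ℝ)).inv (by positivity)).const_mul (4:ℝ)).neg
  have heq : (fun v : ℝ => -(4/(5*v^5))) = fun v : ℝ => -(4 * (5 * v^5)⁻¹) := by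
    funext v
    rw [div_eq_mul_one_div, one_div]
  rw [heq]
  convert (config := { preTransparency := .default }) this using 1
  push_cast
  field_simp

lemma integrableOn_invsix {a : ℝ} (ha : 0 < a) :
    IntegrableOn (fun t : ℝ => 4/t^6) (Ioi a) := by
  exact integrableOn_Ioi_deriv_of_nonneg' (fun x hx => hasDerivAt_invsix (lt_of_lt_of_le ha hx))
    (fun x hx => le_of_lt (by have : 0 < x := lt_trans ha hx; positivity)) tendsto_invsix_anti

lemma integral_invsix {a : ℝ} (ha : 0 < a) :
    ∫ t in Ioi a, 4/t^6 = 4/(5*a^5) := by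
  have h := integral_Ioi_of_hasDerivAt_of_tendsto'
    (fun x hx => hasDerivAt_invsix (lt_of_lt_of_le ha hx)) (integrableOn_invsix ha)
    tendsto_invsix_anti
  simpa using h

lemma integrableOn_G (x : ℝ) : IntegrableOn G (Ioi x) := by
  have hsub : Ioi x ⊆ Ioc x 1 ∪ Ioi 1 := by
    intro t ht
    rcases le_or_gt t 1 with h | h
    · exact Or.inl ⟨ht, h⟩
    · exact Or.inr h
  apply IntegrableOn.mono_set _ hsub
  apply IntegrableOn.union
  · exact G_cont.integrableOn_Ioc
  · apply Integrable.mono ((integrableOn_invcube one_pos).const_mul 3)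
    · exact G_cont.aestronglyMeasurable.restrict
    · refine (ae_restrict_iff' measurableSet_Ioi).2 (ae_of_all _ fun t ht => ?_)
      have ht1 : (1:ℝ) ≤ t := le_of_lt ht
      have h0 : (0:ℝ) < t := lt_of_lt_of_le one_pos ht1
      rw [Real.norm_eq_abs, Real.norm_eq_abs]
      have := abs_G_le ht1
      have h3 : (0:ℝ) ≤ 3 * (1/t^3) := by positivity
      rw [abs_of_nonneg h3]
      exact this

noncomputable def H (x : ℝ) : ℝ := ∫ t in Ioi x, G t

lemma hasDerivAt_H (x : ℝ) : HasDerivAt H (-G x) x :=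
  hasDerivAt_tail _ G_cont integrableOn_G x

lemma le_H {x : ℝ} (hx : 1 ≤ x) : -(1/(2*x^2)) ≤ H x := by
  have h0 : (0:ℝ) < x := lt_of_lt_of_le one_pos hx
  have h1 : ∫ t in Ioi x, -(1/t^3) = -(1/(2*x^2)) := by
    rw [integral_neg, integral_invcube h0]
  rw [← h1]
  apply setIntegral_mono_on ((integrableOn_invcube h0).neg) (integrableOn_G x) measurableSet_Ioi
  intro t ht
  exact le_G (le_trans hx (le_of_lt ht))

lemma H_le {x : ℝ} (hx : 1 ≤ x) : H x ≤ -(1/(2*x^2)) + 4/(5*x^5) := by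
  have h0 : (0:ℝ) < x := lt_of_lt_of_le one_pos hx
  have h1 : ∫ t in Ioi x, (4/t^6 - 1/t^3) = -(1/(2*x^2)) + 4/(5*x^5) := by
    rw [MeasureTheory.integral_sub (integrableOn_invsix h0) (integrableOn_invcube h0),
      integral_invsix h0, integral_invcube h0]
    ring
  rw [← h1]
  apply setIntegral_mono_on (integrableOn_G x)
    ((integrableOn_invsix h0).sub (integrableOn_invcube h0)) measurableSet_Ioi
  intro t ht
  have := G_le (le_trans hx (le_of_lt ht))
  simp only [Pi.sub_apply]
  linarith


noncomputable def y (x : ℝ) : ℝ := 2 * Real.exp (x^3/3) * F x + 2 * x * H x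

lemma y_apply (x : ℝ) : y x = 2 * Real.exp (x^3/3) * F x + 2 * x * H x := rfl

lemma hasDerivAt_exp_cube (x : ℝ) :
    HasDerivAt (fun u : ℝ => Real.exp (u^3/3)) (x^2 * Real.exp (x^3/3)) x := by
  have h : HasDerivAt (fun u : ℝ => u^3/3) (x^2) x := by
    have := (hasDerivAt_pow 3 x).div_const 3
    convert (config := { preTransparency := .default }) this using 1
    push_cast
    ring
  simpa [mul_comm] using h.exp

lemma hasDerivAt_y (x : ℝ) : HasDerivAt y (2 * H x) x := by
  have hc : HasDerivAt (fun u : ℝ => 2 * Real.exp (u^3/3)) (2 * (x^2 * Real.exp (x^3/3))) x :=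
    (hasDerivAt_exp_cube x).const_mul 2
  have h2a : HasDerivAt (fun u : ℝ => 2 * u) 2 x := by
    simpa using (hasDerivAt_id x).const_mul (2:ℝ)
  have h := (hc.mul (hasDerivAt_F x)).add (h2a.mul (hasDerivAt_H x))
  have hE := expEone x
  unfold y
  convert (config := { preTransparency := .default }) h using 1
  unfold G
  linear_combination (2*x) * hE

lemma hasDerivAt_y1 (x : ℝ) : HasDerivAt (fun u : ℝ => 2 * H u) (-(2 * G x)) x := by
  have := (hasDerivAt_H x).const_mul (2:ℝ)
  convert (config := { preTransparency := .default }) this using 1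
  ring

lemma hasDerivAt_G (x : ℝ) :
    HasDerivAt G (Real.exp (x^3/3) * F x + x^3 * Real.exp (x^3/3) * F x - x^2) x := by
  have h := (((hasDerivAt_id x).mul (hasDerivAt_exp_cube x)).mul (hasDerivAt_F x)).sub_const 1
  have hE := expEone x
  unfold G
  convert (config := { preTransparency := .default }) h using 1
  simp only [id_eq, Pi.mul_apply]
  linear_combination (x^2) * hE

lemma hasDerivAt_y2 (x : ℝ) :
    HasDerivAt (fun u : ℝ => -(2 * G u))
      (-2 * (Real.exp (x^3/3) * F x + x^3 * Real.exp (x^3/3) * F x - x^2)) x := by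
  have := ((hasDerivAt_G x).const_mul (2:ℝ)).neg
  convert (config := { preTransparency := .default }) this using 1
  ring

lemma F_zero : F 0 = (3:ℝ) ^ (-(1/3) : ℝ) * Real.Gamma (2/3) := by
  have hcong : ∀ t ∈ Ioi (0:ℝ), t * E t = t ^ (1:ℝ) * Real.exp (-(1/3) * t ^ (3:ℝ)) := by
    intro t ht
    rw [Real.rpow_one]
    congr 1
    unfold E
    congr 1
    rw [show (3:ℝ) = ((3:ℕ):ℝ) by norm_num, Real.rpow_natCast]
    ring
  have h1 : F 0 = ∫ t in Ioi (0:ℝ), t ^ (1:ℝ) * Real.exp (-(1/3) * t ^ (3:ℝ)) :=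
    setIntegral_congr_fun measurableSet_Ioi hcong
  rw [h1, integral_rpow_mul_exp_neg_mul_rpow (by norm_num) (by norm_num) (by norm_num)]
  have h2 : ((1:ℝ)/3) ^ (-(1 + 1) / 3 : ℝ) * (1/3) = (3:ℝ) ^ (-(1/3) : ℝ) := by
    have h3 : ((1:ℝ)/3) = (3:ℝ) ^ (-1 : ℝ) := by
      rw [Real.rpow_neg_one]
      norm_num
    rw [h3, ← Real.rpow_mul (by norm_num : (0:ℝ) ≤ 3),
      ← Real.rpow_add (by norm_num : (0:ℝ) < 3)]
    norm_num
  rw [h2]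
  norm_num

lemma tendsto_G_add_one : Tendsto (fun x : ℝ => G x + 1) atTop (nhds 1) := by
  have hlow : Tendsto (fun x : ℝ => 1 - 1/x^3) atTop (nhds 1) := by
    have := (tendsto_const_nhds : Tendsto (fun _ : ℝ => (1:ℝ)) atTop (nhds 1)).sub
      (tendsto_one_div_pow 3 (by norm_num))
    simpa using this
  have hhigh : Tendsto (fun x : ℝ => 1 - 1/x^3 + 4/x^6) atTop (nhds 1) := by
    have h6 := (tendsto_one_div_pow 6 (by norm_num)).const_mul (4:ℝ)
    have := ((tendsto_const_nhds : Tendsto (fun _ : ℝ => (1:ℝ)) atTop (nhds 1)).sub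
      (tendsto_one_div_pow 3 (by norm_num))).add h6
    have h2 : Tendsto (fun x : ℝ => 1 - 1/x^3 + 4 * (1/x^6)) atTop (nhds 1) := by
      simpa using this
    apply h2.congr
    intro x
    rw [mul_one_div]
  apply tendsto_of_tendsto_of_tendsto_of_le_of_le' hlow hhigh
  · filter_upwards [eventually_ge_atTop (1:ℝ)] with x hx
    have := le_G hx
    linarith
  · filter_upwards [eventually_ge_atTop (1:ℝ)] with x hx
    have := G_le hx
    linarith

lemma tendsto_sqH : Tendsto (fun x : ℝ => x^2 * H x) atTop (nhds (-(1/2))) := by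
  have hlow : Tendsto (fun _ : ℝ => -(1/2) : ℝ → ℝ) atTop (nhds (-(1/2))) := tendsto_const_nhds
  have hhigh : Tendsto (fun x : ℝ => -(1/2) + (4/5) * (1/x^3)) atTop (nhds (-(1/2))) := by
    have := (tendsto_const_nhds : Tendsto (fun _ : ℝ => (-(1/2):ℝ)) atTop (nhds (-(1/2)))).add
      ((tendsto_one_div_pow 3 (by norm_num)).const_mul ((4:ℝ)/5))
    simpa using this
  apply tendsto_of_tendsto_of_tendsto_of_le_of_le' hlow hhigh
  · filter_upwards [eventually_ge_atTop (1:ℝ)] with x hx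
    have h0 : (0:ℝ) < x := lt_of_lt_of_le one_pos hx
    have h := le_H hx
    have := mul_le_mul_of_nonneg_left h (sq_nonneg x)
    have heq : x^2 * (-(1/(2*x^2))) = -(1/2) := by
      field_simp
    rw [heq] at this
    linarith
  · filter_upwards [eventually_ge_atTop (1:ℝ)] with x hx
    have h0 : (0:ℝ) < x := lt_of_lt_of_le one_pos hx
    have h := H_le hx
    have hmul := mul_le_mul_of_nonneg_left h (sq_nonneg x)
    have heq : x^2 * (-(1/(2*x^2)) + 4/(5*x^5)) = -(1/2) + (4/5) * (1/x^3) := by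
      field_simp
    rw [heq] at hmul
    linarith

lemma tendsto_xy : Tendsto (fun x : ℝ => x * y x) atTop (nhds 1) := by
  have h1 : Tendsto (fun x : ℝ => x * Real.exp (x^3/3) * F x) atTop (nhds 1) := by
    apply tendsto_G_add_one.congr
    intro x
    unfold G
    ring
  have := (h1.const_mul 2).add (tendsto_sqH.const_mul 2)
  have h2 : Tendsto (fun x : ℝ => 2 * (x * Real.exp (x^3/3) * F x) + 2 * (x^2 * H x))
      atTop (nhds 1) := by
    convert this using 2
    norm_num
  apply h2.congr
  intro x
  rw [y_apply]
  ring

end Subdom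

open Filter

/-- There is a solution of `y''' − x²y'' − xy' + y = 0` on `ℝ` with `y(x) ~ x⁻¹` as
`x → +∞` and `y(0) = 2·3^{−1/3}·Γ(2/3)`. -/
theorem exists_subdominant_solution_with_value_at_zero :
    ∃ y : ℝ → ℝ, ContDiff ℝ 3 y ∧
      (∀ x : ℝ,
        iteratedDeriv 3 y x - x ^ 2 * iteratedDeriv 2 y x - x * deriv y x + y x = 0) ∧
      Tendsto (fun x : ℝ => x * y x) atTop (nhds 1) ∧
      y 0 = 2 * (3 : ℝ) ^ (-(1 / 3) : ℝ) * Real.Gamma (2 / 3) := by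
  have hD1 : deriv Subdom.y = fun u => 2 * Subdom.H u :=
    funext fun u => (Subdom.hasDerivAt_y u).deriv
  have hD2 : deriv (fun u : ℝ => 2 * Subdom.H u) = fun u => -(2 * Subdom.G u) :=
    funext fun u => (Subdom.hasDerivAt_y1 u).deriv
  have hD3 : deriv (fun u : ℝ => -(2 * Subdom.G u)) = fun u =>
      -2 * (Real.exp (u^3/3) * Subdom.F u + u^3 * Real.exp (u^3/3) * Subdom.F u - u^2) :=
    funext fun u => (Subdom.hasDerivAt_y2 u).deriv
  refine ⟨Subdom.y, ?_, ?_, Subdom.tendsto_xy, ?_⟩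
  · -- smoothness
    have hcF : Continuous fun u : ℝ => Real.exp (u^3/3) := by continuity
    have hcont3 : Continuous (fun u : ℝ =>
        -2 * (Real.exp (u^3/3) * Subdom.F u + u^3 * Real.exp (u^3/3) * Subdom.F u - u^2)) :=
      continuous_const.mul (((hcF.mul Subdom.F_cont).add
        (((continuous_pow 3).mul hcF).mul Subdom.F_cont)).sub (continuous_pow 2))
    rw [show (3 : WithTop ℕ∞) = 2 + 1 from rfl, contDiff_succ_iff_deriv]
    refine ⟨fun u => (Subdom.hasDerivAt_y u).differentiableAt, by simp, ?_⟩
    rw [hD1, show (2 : WithTop ℕ∞) = 1 + 1 from rfl, contDiff_succ_iff_deriv]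
    refine ⟨fun u => (Subdom.hasDerivAt_y1 u).differentiableAt, by simp, ?_⟩
    rw [hD2, show (1 : WithTop ℕ∞) = 0 + 1 from rfl, contDiff_succ_iff_deriv]
    refine ⟨fun u => (Subdom.hasDerivAt_y2 u).differentiableAt, by simp, ?_⟩
    rw [hD3, contDiff_zero]
    exact hcont3
  · -- the ODE
    intro x
    have e1 : deriv Subdom.y x = 2 * Subdom.H x := by rw [hD1]
    have e2 : iteratedDeriv 2 Subdom.y x = -(2 * Subdom.G x) := by
      rw [show (2:ℕ) = 1 + 1 from rfl, iteratedDeriv_succ, iteratedDeriv_one, hD1, hD2]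
    have e3 : iteratedDeriv 3 Subdom.y x =
        -2 * (Real.exp (x^3/3) * Subdom.F x + x^3 * Real.exp (x^3/3) * Subdom.F x - x^2) := by
      rw [show iteratedDeriv 3 Subdom.y = iteratedDeriv (2 + 1) Subdom.y from rfl, iteratedDeriv_succ,
        show iteratedDeriv 2 Subdom.y = iteratedDeriv (1 + 1) Subdom.y from rfl,
        iteratedDeriv_succ, iteratedDeriv_one, hD1, hD2, hD3]
    rw [e3, e2, e1, Subdom.y_apply]
    unfold Subdom.G
    ring
  · -- value at zero
    rw [show Subdom.y 0 = 2 * Subdom.F 0 by rw [Subdom.y_apply]; norm_num, Subdom.F_zero]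
    ring
end
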